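/- Let V, W₁, W₂ be finite-dimensional real inner product spaces, c, c̃ ∈ ℝ with (c,c̃) ∈ D(c,c̃), let A be a nonderogatory endomorphism of V, let ψ : V → ℝ be linear and ν : V → W₁, β : V → W₂ be linear maps, and suppose X ∈ End(V) is a solution of the system (⋆) { X + Xᵗ = νᵗν + βᵗβ + c̃·ψᵗψ ; X∘A + Aᵗ∘Xᵗ = βᵗβ − (c−c̃)·ψᵗψ }. Define S = ker ν ∩ ker β if (c,c̃) = (0,0) and S = ker ψ ∩ ker ν ∩ ker β otherwise. Then ker X = ker Xᵗ ⊆ S and A(ker X) ⊆ ker X. In particular, if no nonzero eigenvector of the complexification A^ℂ of A lies in the complexification S⊗ℂ of S (equivalently, ker(A^ℂ − αI) ∩ (S⊗ℂ) = {0} for every eigenvalue α ∈ ℂ of A^ℂ), then X is invertible. -/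

import Mathlib

open scoped RealInnerProductSpace TensorProduct

variable {V W₁ W₂ : Type*}

/-- `νᵗν`, the symmetric endomorphism associated to a linear map `ν`. -/
noncomputable def gram [NormedAddCommGroup V] [InnerProductSpace ℝ V] [FiniteDimensional ℝ V]
    [NormedAddCommGroup W₁] [InnerProductSpace ℝ W₁] [FiniteDimensional ℝ W₁]
    (ν : V →ₗ[ℝ] W₁) : Module.End ℝ V :=
  LinearMap.adjoint ν ∘ₗ ν

/-- The system (⋆): `X + Xᵗ = νᵗν + βᵗβ + c̃·ψᵗψ` and
`X∘A + Aᵗ∘Xᵗ = βᵗβ − (c−c̃)·ψᵗψ`. -/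
noncomputable def SolvesSys [NormedAddCommGroup V] [InnerProductSpace ℝ V] [FiniteDimensional ℝ V]
    [NormedAddCommGroup W₁] [InnerProductSpace ℝ W₁] [FiniteDimensional ℝ W₁]
    [NormedAddCommGroup W₂] [InnerProductSpace ℝ W₂] [FiniteDimensional ℝ W₂]
    (c ct : ℝ) (A : Module.End ℝ V)
    (ψ : V →ₗ[ℝ] ℝ) (ν : V →ₗ[ℝ] W₁) (β : V →ₗ[ℝ] W₂) (X : Module.End ℝ V) : Prop :=
  X + LinearMap.adjoint X = gram ν + gram β + ct • gram ψ ∧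
  X * A + LinearMap.adjoint A * LinearMap.adjoint X = gram β - (c - ct) • gram ψ

/-- for `(c,c̃) ∈ D(c,c̃)`, a nonderogatory `A`, and a solution `X` of (⋆),
with `S = ker ν ∩ ker β` if `(c,c̃) = (0,0)` and `S = ker ψ ∩ ker ν ∩ ker β` otherwise:
`ker X = ker Xᵗ ⊆ S` and `A(ker X) ⊆ ker X`; in particular, if no nonzero eigenvector of
`A^ℂ` lies in `S ⊗ ℂ`, then `X` is invertible. -/
theorem stmt_1 [NormedAddCommGroup V] [InnerProductSpace ℝ V] [FiniteDimensional ℝ V]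
    [NormedAddCommGroup W₁] [InnerProductSpace ℝ W₁] [FiniteDimensional ℝ W₁]
    [NormedAddCommGroup W₂] [InnerProductSpace ℝ W₂] [FiniteDimensional ℝ W₂]
    (c ct : ℝ) (hD : ¬ (ct < 0 ∧ ct ≤ c ∧ c ≤ 0))
    (A : Module.End ℝ V)
    (hA : minpoly ℝ (A : V →ₗ[ℝ] V) = LinearMap.charpoly (A : V →ₗ[ℝ] V))
    (ψ : V →ₗ[ℝ] ℝ) (ν : V →ₗ[ℝ] W₁) (β : V →ₗ[ℝ] W₂)
    (X : Module.End ℝ V) (hX : SolvesSys c ct A ψ ν β X)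
    (S : Submodule ℝ V)
    (hS : S = if c = 0 ∧ ct = 0 then LinearMap.ker ν ⊓ LinearMap.ker β
      else LinearMap.ker ψ ⊓ LinearMap.ker ν ⊓ LinearMap.ker β) :
    LinearMap.ker X = LinearMap.ker (LinearMap.adjoint X) ∧
    LinearMap.ker X ≤ S ∧
    Submodule.map (A : V →ₗ[ℝ] V) (LinearMap.ker X) ≤ LinearMap.ker X ∧
    ((∀ μ : ℂ, Module.End.HasEigenvalue (LinearMap.baseChange ℂ (A : V →ₗ[ℝ] V)) μ →
        Module.End.eigenspace (LinearMap.baseChange ℂ (A : V →ₗ[ℝ] V)) μ ⊓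
          Submodule.baseChange ℂ S = ⊥) →
      Function.Bijective X) := by
  obtain ⟨h1, h2⟩ := hX
  -- Core computation: any `u ∈ ker Xᵗ` satisfies everything we need.
  have key : ∀ u : V, LinearMap.adjoint X u = 0 →
      X u = 0 ∧ X (A u) = 0 ∧ ν u = 0 ∧ β u = 0 ∧ (ψ u = 0 ∨ (c = 0 ∧ ct = 0)) := by
    intro u hu
    have e1 : X u = LinearMap.adjoint ν (ν u) + LinearMap.adjoint β (β u)
        + ct • LinearMap.adjoint ψ (ψ u) := by
      have := congrFun (congrArg (DFunLike.coe) h1) u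
      simpa [gram, hu] using this
    have e2 : X (A u) = LinearMap.adjoint β (β u)
        - (c - ct) • LinearMap.adjoint ψ (ψ u) := by
      have := congrFun (congrArg (DFunLike.coe) h2) u
      simpa [gram, hu, Module.End.mul_apply] using this
    have i1 : ⟪X u, u⟫ = 0 := by
      rw [← LinearMap.adjoint_inner_right, hu, inner_zero_right]
    have i2 : ⟪X (A u), u⟫ = 0 := by
      rw [← LinearMap.adjoint_inner_right, hu, inner_zero_right]
    have eA : ⟪ν u, ν u⟫ + ⟪β u, β u⟫ + ct * (ψ u * ψ u) = 0 := by
      rw [e1] at i1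
      simpa [inner_add_left, real_inner_smul_left, LinearMap.adjoint_inner_left,
        RCLike.inner_apply, conj_trivial, sq] using i1
    have eB : ⟪β u, β u⟫ - (c - ct) * (ψ u * ψ u) = 0 := by
      rw [e2] at i2
      simpa [inner_sub_left, real_inner_smul_left, LinearMap.adjoint_inner_left,
        RCLike.inner_apply, conj_trivial, sq] using i2
    have ha : (0:ℝ) ≤ ⟪ν u, ν u⟫ := real_inner_self_nonneg
    have hb : (0:ℝ) ≤ ⟪β u, β u⟫ := real_inner_self_nonneg
    have main : ν u = 0 ∧ β u = 0 ∧ (ψ u = 0 ∨ (c = 0 ∧ ct = 0)) := by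
      by_cases hp : ψ u = 0
      · rw [hp, mul_zero, mul_zero] at eA eB
        have hn : ⟪ν u, ν u⟫ = 0 := by linarith
        have hbz : ⟪β u, β u⟫ = 0 := by linarith
        exact ⟨inner_self_eq_zero.mp hn, inner_self_eq_zero.mp hbz, Or.inl hp⟩
      · have hpp : 0 < ψ u * ψ u := mul_self_pos.mpr hp
        have hcct : ct ≤ c := by nlinarith
        have hc0 : c ≤ 0 := by nlinarith
        have hct0 : ct ≤ 0 := by nlinarith
        have hctz : ct = 0 := by
          by_contra h
          exact hD ⟨lt_of_le_of_ne hct0 h, hcct, hc0⟩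
        have hcz : c = 0 := le_antisymm hc0 (hctz ▸ hcct)
        rw [hctz] at eA
        rw [hcz, hctz] at eB
        simp only [zero_mul, sub_self, sub_zero, add_zero] at eA eB
        have hn : ⟪ν u, ν u⟫ = 0 := by linarith
        have hbz : ⟪β u, β u⟫ = 0 := by linarith
        exact ⟨inner_self_eq_zero.mp hn, inner_self_eq_zero.mp hbz, Or.inr ⟨hcz, hctz⟩⟩
    obtain ⟨hn, hbz, hd⟩ := main
    have hψ1 : ct • LinearMap.adjoint ψ (ψ u) = 0 := by
      rcases hd with hp | ⟨hcz, hctz⟩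
      · simp [hp]
      · simp [hctz]
    have hψ2 : (c - ct) • LinearMap.adjoint ψ (ψ u) = 0 := by
      rcases hd with hp | ⟨hcz, hctz⟩
      · simp [hp]
      · simp [hcz, hctz]
    refine ⟨?_, ?_, hn, hbz, hd⟩
    · rw [e1, hn, hbz, map_zero, map_zero, hψ1, add_zero, add_zero]
    · rw [e2, hbz, map_zero, hψ2, sub_zero]
  -- `ker Xᵗ ≤ ker X`
  have hker : LinearMap.ker (LinearMap.adjoint X) ≤ LinearMap.ker X := by
    intro u hu
    exact LinearMap.mem_ker.mpr (key u (LinearMap.mem_ker.mp hu)).1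
  -- `ker Xᵗ = (range X)ᗮ`
  have horth : LinearMap.ker (LinearMap.adjoint X) = (LinearMap.range X)ᗮ := by
    ext u
    simp only [LinearMap.mem_ker, Submodule.mem_orthogonal]
    constructor
    · rintro h v ⟨w, rfl⟩
      rw [← LinearMap.adjoint_inner_right, h, inner_zero_right]
    · intro h
      have hz : ⟪LinearMap.adjoint X u, LinearMap.adjoint X u⟫ = 0 := by
        rw [LinearMap.adjoint_inner_left, real_inner_comm]
        exact h _ ⟨LinearMap.adjoint X u, rfl⟩
      exact inner_self_eq_zero.mp hz
  have hkereq : LinearMap.ker X = LinearMap.ker (LinearMap.adjoint X) := by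
    refine (Submodule.eq_of_le_of_finrank_le hker ?_).symm
    have hr1 := LinearMap.finrank_range_add_finrank_ker (X : V →ₗ[ℝ] V)
    have hr2 := Submodule.finrank_add_finrank_orthogonal
      (K := LinearMap.range (X : V →ₗ[ℝ] V))
    rw [horth]
    omega
  -- `ker X ≤ S`
  have hS2 : LinearMap.ker X ≤ S := by
    intro u hu
    rw [hkereq, LinearMap.mem_ker] at hu
    obtain ⟨-, -, hn, hbz, hd⟩ := key u hu
    rw [hS]
    split_ifs with hc
    · exact Submodule.mem_inf.mpr ⟨LinearMap.mem_ker.mpr hn, LinearMap.mem_ker.mpr hbz⟩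
    · have hp : ψ u = 0 := by
        rcases hd with hp | hcc
        · exact hp
        · exact absurd hcc hc
      exact Submodule.mem_inf.mpr ⟨Submodule.mem_inf.mpr
        ⟨LinearMap.mem_ker.mpr hp, LinearMap.mem_ker.mpr hn⟩, LinearMap.mem_ker.mpr hbz⟩
  -- `A (ker X) ≤ ker X`
  have hS3 : Submodule.map (A : V →ₗ[ℝ] V) (LinearMap.ker X) ≤ LinearMap.ker X := by
    rintro x ⟨u, hu, rfl⟩
    have hu0 : u ∈ LinearMap.ker X := hu
    rw [hkereq] at hu0
    exact LinearMap.mem_ker.mpr (key u (LinearMap.mem_ker.mp hu0)).2.1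
  refine ⟨hkereq, hS2, hS3, ?_⟩
  intro hspec
  suffices hinj : Function.Injective (X : V →ₗ[ℝ] V) by
    exact ⟨hinj, (LinearMap.injective_iff_surjective).mp hinj⟩
  rw [← LinearMap.ker_eq_bot]
  by_contra hne
  obtain ⟨u, huK, hune⟩ := Submodule.exists_mem_ne_zero_of_ne_bot hne
  set K := LinearMap.ker X with hKdef
  set Af := LinearMap.baseChange ℂ (A : V →ₗ[ℝ] V) with hAfdef
  have hAK : ∀ m ∈ K, (A : V →ₗ[ℝ] V) m ∈ K := fun m hm => hS3 ⟨m, hm, rfl⟩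
  have hmaple : Submodule.map Af (K.baseChange ℂ) ≤ K.baseChange ℂ := by
    have hcomp : Af ∘ₗ K.subtype.baseChange ℂ =
        K.subtype.baseChange ℂ ∘ₗ ((A : V →ₗ[ℝ] V).restrict hAK).baseChange ℂ := by
      rw [hAfdef, ← LinearMap.baseChange_comp, ← LinearMap.baseChange_comp]; rfl
    rintro _ ⟨x, ⟨y, rfl⟩, rfl⟩
    exact ⟨_, (LinearMap.congr_fun hcomp y).symm⟩
  have hmapb : ∀ x ∈ K.baseChange ℂ, Af x ∈ K.baseChange ℂ :=
    fun x hx => hmaple ⟨x, hx, rfl⟩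
  have hw : (1:ℂ) ⊗ₜ[ℝ] u ∈ K.baseChange ℂ :=
    Submodule.tmul_mem_baseChange_of_mem 1 huK
  have hwne : (1:ℂ) ⊗ₜ[ℝ] u ≠ 0 := by
    intro h
    have h2 := congrArg
      (fun z => (TensorProduct.rid ℝ ℂ).toLinearMap ((LinearMap.baseChange ℂ (innerₛₗ ℝ u)) z)) h
    simp only [LinearMap.baseChange_tmul, map_zero, LinearEquiv.coe_coe,
      TensorProduct.rid_tmul] at h2
    have h3 : ⟪u, u⟫ = 0 := by
      have h4 : (⟪u, u⟫ : ℝ) • (1:ℂ) = 0 := by simpa [innerₛₗ_apply_apply] using h2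
      rcases smul_eq_zero.mp h4 with h5 | h5
      · exact h5
      · exact absurd h5 one_ne_zero
    exact hune (inner_self_eq_zero.mp h3)
  haveI : Nontrivial ↥(K.baseChange ℂ) :=
    nontrivial_of_ne ⟨_, hw⟩ 0 (by simpa [Submodule.mk_eq_zero] using hwne)
  let g : Module.End ℂ ↥(K.baseChange ℂ) := LinearMap.restrict Af hmapb
  obtain ⟨μ, hμ⟩ := Module.End.exists_eigenvalue g
  obtain ⟨v, hv⟩ := hμ.exists_hasEigenvector
  have hvv : Af v.val = μ • v.val := by
    have h5 := Module.End.mem_eigenspace_iff.mp hv.1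
    have h6 := congrArg Subtype.val h5
    simpa [g, LinearMap.restrict_coe_apply] using h6
  have hvne : (v.val : ℂ ⊗[ℝ] V) ≠ 0 := fun hh => hv.2 (Subtype.ext hh)
  have hev : Module.End.HasEigenvalue Af μ :=
    Module.End.hasEigenvalue_of_hasEigenvector
      ⟨Module.End.mem_eigenspace_iff.mpr hvv, hvne⟩
  have hKS : K.baseChange ℂ ≤ S.baseChange ℂ := by
    rw [Submodule.baseChange, Submodule.baseChange]
    exact Submodule.baseChange_mono ℂ hS2
  have hbot := hspec μ hev
  have hmem : v.val ∈ Module.End.eigenspace Af μ ⊓ S.baseChange ℂ :=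
    Submodule.mem_inf.mpr ⟨Module.End.mem_eigenspace_iff.mpr hvv, hKS v.2⟩
  rw [hbot] at hmem
  exact hvne (Submodule.mem_bot ℂ |>.mp hmem)
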